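/- Let C be an additive category and (T, F) a pretorsion theory with trivial class Z. Then (Σ(T), Σ(F)) is a torsion theory in the quotient category C/Z, where Σ : C → C/Z is the quotient functor by the ideal of Z-trivial morphisms. -/

import Mathlib

open CategoryTheory CategoryTheory.Limits

universe v u

variable {C : Type u} [Category.{v} C]

/-- A morphism is `Z`-trivial if it factors through an object of `Z`. -/
def IsTrivialMor (Z : Set C) {X Y : C} (f : X ⟶ Y) : Prop :=
  ∃ (W : C) (p : X ⟶ W) (q : W ⟶ Y), W ∈ Z ∧ p ≫ q = f

/-- `ε` is a `Z`-kernel of `f`. -/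
def IsZKernel (Z : Set C) {K A B : C} (ε : K ⟶ A) (f : A ⟶ B) : Prop :=
  IsTrivialMor Z (ε ≫ f) ∧
    ∀ ⦃Y : C⦄ (l : Y ⟶ A), IsTrivialMor Z (l ≫ f) → ∃! l' : Y ⟶ K, l' ≫ ε = l

/-- `π` is a `Z`-cokernel of `f`. -/
def IsZCokernel (Z : Set C) {A B Q : C} (f : A ⟶ B) (π : B ⟶ Q) : Prop :=
  IsTrivialMor Z (f ≫ π) ∧
    ∀ ⦃Y : C⦄ (l : B ⟶ Y), IsTrivialMor Z (f ≫ l) → ∃! l' : Q ⟶ Y, π ≫ l' = l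

/-- `0 → A → X → B → 0` is a short exact sequence: `f` is a kernel of `g`
and `g` is a cokernel of `f`. -/
structure IsShortExactSeq [HasZeroMorphisms C] {A X B : C} (f : A ⟶ X) (g : X ⟶ B) : Prop where
  zero : f ≫ g = 0
  ker : ∀ ⦃Y : C⦄ (l : Y ⟶ X), l ≫ g = 0 → ∃! l' : Y ⟶ A, l' ≫ f = l
  coker : ∀ ⦃Y : C⦄ (l : X ⟶ Y), f ≫ l = 0 → ∃! l' : B ⟶ Y, g ≫ l' = l

/-- A torsion theory in a pointed category. -/
structure TorsionTheory (C : Type u) [Category.{v} C] [HasZeroMorphisms C] :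
    Type (max u v) where
  T : Set C
  F : Set C
  repleteT : ∀ ⦃X Y : C⦄, (X ≅ Y) → X ∈ T → Y ∈ T
  repleteF : ∀ ⦃X Y : C⦄, (X ≅ Y) → X ∈ F → Y ∈ F
  hom_zero : ∀ ⦃X Y : C⦄, X ∈ T → Y ∈ F → ∀ f : X ⟶ Y, f = 0
  exists_seq : ∀ X : C, ∃ (A B : C) (f : A ⟶ X) (g : X ⟶ B),
      A ∈ T ∧ B ∈ F ∧ IsShortExactSeq f g

/-- A pretorsion theory, with class of trivial objects `T ∩ F`. -/
structure PretorsionTheory (C : Type u) [Category.{v} C] : Type (max u v) where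
  T : Set C
  F : Set C
  repleteT : ∀ ⦃X Y : C⦄, (X ≅ Y) → X ∈ T → Y ∈ T
  repleteF : ∀ ⦃X Y : C⦄, (X ≅ Y) → X ∈ F → Y ∈ F
  hom_triv : ∀ ⦃X Y : C⦄, X ∈ T → Y ∈ F → ∀ f : X ⟶ Y, IsTrivialMor (T ∩ F) f
  exists_seq : ∀ X : C, ∃ (A B : C) (f : A ⟶ X) (g : X ⟶ B),
      A ∈ T ∧ B ∈ F ∧ IsZKernel (T ∩ F) f g ∧ IsZCokernel (T ∩ F) f g

/-- `A ∗ B`: objects that are extensions of an object of `A` by an object of `B`. -/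
def extClass [HasZeroMorphisms C] (A B : Set C) : Set C :=
  {X | ∃ (A₀ B₀ : C) (f : A₀ ⟶ X) (g : X ⟶ B₀), A₀ ∈ A ∧ B₀ ∈ B ∧ IsShortExactSeq f g}

/-- A Serre subcategory: closed under subobjects, quotients and extensions. -/
def SerreSub [HasZeroMorphisms C] (S : Set C) : Prop :=
  (∀ ⦃A B : C⦄ (m : A ⟶ B), Mono m → B ∈ S → A ∈ S) ∧
  (∀ ⦃A B : C⦄ (e : A ⟶ B), Epi e → A ∈ S → B ∈ S) ∧
  (∀ ⦃A X B : C⦄ (f : A ⟶ X) (g : X ⟶ B), IsShortExactSeq f g → A ∈ S → B ∈ S → X ∈ S)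

/-- The hom relation identifying morphisms whose difference is `Z`-trivial. -/
def trivRel [Preadditive C] (Z : Set C) : HomRel C :=
  fun {_ _} f g => IsTrivialMor Z (f - g)

/-! ### Auxiliary lemmas -/

lemma IsTrivialMor.precomp {Z : Set C} {X Y W : C} {f : X ⟶ Y} (h : IsTrivialMor Z f)
    (g : W ⟶ X) : IsTrivialMor Z (g ≫ f) := by
  obtain ⟨V, p, q, hV, hpq⟩ := h
  exact ⟨V, g ≫ p, q, hV, by rw [Category.assoc, hpq]⟩

lemma IsTrivialMor.postcomp {Z : Set C} {X Y W : C} {f : X ⟶ Y} (h : IsTrivialMor Z f)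
    (g : Y ⟶ W) : IsTrivialMor Z (f ≫ g) := by
  obtain ⟨V, p, q, hV, hpq⟩ := h
  exact ⟨V, p, q ≫ g, hV, by rw [← Category.assoc, hpq]⟩

lemma IsTrivialMor.neg [Preadditive C] {Z : Set C} {X Y : C} {f : X ⟶ Y}
    (h : IsTrivialMor Z f) : IsTrivialMor Z (-f) := by
  obtain ⟨V, p, q, hV, hpq⟩ := h
  exact ⟨V, -p, q, hV, by rw [Preadditive.neg_comp, hpq]⟩

variable (P : PretorsionTheory C)

open ZeroObject in
lemma PretorsionTheory.exists_triv_obj [HasZeroObject C] : ∃ W : C, W ∈ P.T ∩ P.F := by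
  obtain ⟨A, B, f, g, hA, hB, hk, _⟩ := P.exists_seq (0 : C)
  obtain ⟨W, _, _, hW, _⟩ := P.hom_triv hA hB (f ≫ g)
  exact ⟨W, hW⟩

lemma PretorsionTheory.triv_zero [Preadditive C] [HasZeroObject C] {X Y : C} :
    IsTrivialMor (P.T ∩ P.F) (0 : X ⟶ Y) := by
  obtain ⟨W, hW⟩ := P.exists_triv_obj
  exact ⟨W, 0, 0, hW, by simp⟩

/-- Key lemma: the sum of two trivial morphisms is trivial. -/
lemma PretorsionTheory.triv_add [Preadditive C] [HasFiniteBiproducts C]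
    {X Y : C} {f₁ f₂ : X ⟶ Y} (h₁ : IsTrivialMor (P.T ∩ P.F) f₁)
    (h₂ : IsTrivialMor (P.T ∩ P.F) f₂) : IsTrivialMor (P.T ∩ P.F) (f₁ + f₂) := by
  haveI : HasBinaryBiproducts C := hasBinaryBiproducts_of_finite_biproducts C
  obtain ⟨W₁, p₁, q₁, hW₁, e₁⟩ := h₁
  obtain ⟨W₂, p₂, q₂, hW₂, e₂⟩ := h₂
  obtain ⟨A, B, a, b, hA, hB, hk, hc⟩ := P.exists_seq (W₁ ⊞ W₂)
  -- `a` is a split epi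
  obtain ⟨l₁, hl₁, -⟩ := hk.2 biprod.inl (P.hom_triv hW₁.1 hB _)
  obtain ⟨l₂, hl₂, -⟩ := hk.2 biprod.inr (P.hom_triv hW₂.1 hB _)
  -- `b` is a split mono
  obtain ⟨m₁, hm₁, -⟩ := hc.2 biprod.fst ((P.hom_triv hA hW₁.2 _))
  obtain ⟨m₂, hm₂, -⟩ := hc.2 biprod.snd ((P.hom_triv hA hW₂.2 _))
  obtain ⟨V, s, t, hV, hst⟩ := hk.1
  refine ⟨V, biprod.lift p₁ p₂ ≫ biprod.desc l₁ l₂ ≫ s,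
    t ≫ biprod.lift m₁ m₂ ≫ biprod.desc q₁ q₂, hV, ?_⟩
  have hid : biprod.desc l₁ l₂ ≫ (s ≫ t) ≫ biprod.lift m₁ m₂ = 𝟙 (W₁ ⊞ W₂) := by
    rw [hst]
    have h1 : biprod.desc l₁ l₂ ≫ a = 𝟙 (W₁ ⊞ W₂) := by
      apply biprod.hom_ext' <;> simp [hl₁, hl₂]
    have h2 : b ≫ biprod.lift m₁ m₂ = 𝟙 (W₁ ⊞ W₂) := by
      apply biprod.hom_ext <;> simp [hm₁, hm₂]
    calc biprod.desc l₁ l₂ ≫ (a ≫ b) ≫ biprod.lift m₁ m₂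
        = (biprod.desc l₁ l₂ ≫ a) ≫ (b ≫ biprod.lift m₁ m₂) := by simp
      _ = 𝟙 _ := by rw [h1, h2, Category.id_comp]
  calc (biprod.lift p₁ p₂ ≫ biprod.desc l₁ l₂ ≫ s) ≫
        t ≫ biprod.lift m₁ m₂ ≫ biprod.desc q₁ q₂
      = biprod.lift p₁ p₂ ≫ (biprod.desc l₁ l₂ ≫ (s ≫ t) ≫ biprod.lift m₁ m₂) ≫
        biprod.desc q₁ q₂ := by simp
    _ = biprod.lift p₁ p₂ ≫ biprod.desc q₁ q₂ := by rw [hid, Category.id_comp]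
    _ = f₁ + f₂ := by rw [biprod.lift_desc, e₁, e₂]

lemma PretorsionTheory.triv_sub [Preadditive C] [HasFiniteBiproducts C]
    {X Y : C} {f₁ f₂ : X ⟶ Y} (h₁ : IsTrivialMor (P.T ∩ P.F) f₁)
    (h₂ : IsTrivialMor (P.T ∩ P.F) f₂) : IsTrivialMor (P.T ∩ P.F) (f₁ - f₂) := by
  rw [sub_eq_add_neg]; exact P.triv_add h₁ h₂.neg

instance PretorsionTheory.congruence [Preadditive C] [HasZeroObject C] [HasFiniteBiproducts C] :
    CategoryTheory.Congruence (trivRel (P.T ∩ P.F)) where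
  equivalence := by
    refine ⟨fun f => ?_, fun {f g} h => ?_, fun {f g h} h₁ h₂ => ?_⟩
    · show IsTrivialMor _ (f - f); rw [sub_self]; exact P.triv_zero
    · have := h.neg; rwa [neg_sub] at this
    · have := P.triv_add h₁ h₂
      rwa [sub_add_sub_cancel] at this
  comp_left := by
    intro X Y Z f g g' h
    show IsTrivialMor _ _
    rw [← Preadditive.comp_sub]
    exact h.precomp f
  comp_right := by
    intro X Y Z f f' g h
    show IsTrivialMor _ _
    rw [← Preadditive.sub_comp]
    exact h.postcomp g

/-- Cancellation: if `f` is a `Z`-kernel of `g` with torsion-free codomain, then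
`u ≫ f` trivial implies `u` trivial. -/
lemma PretorsionTheory.ker_cancel {A X B W : C} {f : A ⟶ X} {g : X ⟶ B}
    (hB : B ∈ P.F) (hk : IsZKernel (P.T ∩ P.F) f g) {u : W ⟶ A}
    (hu : IsTrivialMor (P.T ∩ P.F) (u ≫ f)) : IsTrivialMor (P.T ∩ P.F) u := by
  obtain ⟨V, s, t, hV, hst⟩ := hu
  obtain ⟨t', ht', -⟩ := hk.2 t (P.hom_triv hV.1 hB _)
  obtain ⟨v, -, hv⟩ := hk.2 (u ≫ f) (by rw [Category.assoc]; exact (hk.1).precomp u)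
  have h1 : u = v := hv u rfl
  have h2 : s ≫ t' = v := hv _ (show (s ≫ t') ≫ f = u ≫ f by
    rw [Category.assoc, ht', hst])
  rw [h1, ← h2]
  exact ⟨V, s, t', hV, rfl⟩

lemma PretorsionTheory.coker_cancel {A X B W : C} {f : A ⟶ X} {g : X ⟶ B}
    (hA : A ∈ P.T) (hc : IsZCokernel (P.T ∩ P.F) f g) {u : B ⟶ W}
    (hu : IsTrivialMor (P.T ∩ P.F) (g ≫ u)) : IsTrivialMor (P.T ∩ P.F) u := by
  obtain ⟨V, s, t, hV, hst⟩ := hu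
  obtain ⟨s', hs', -⟩ := hc.2 s (P.hom_triv hA hV.2 _)
  obtain ⟨v, -, hv⟩ := hc.2 (g ≫ u) (by rw [← Category.assoc]; exact (hc.1).postcomp u)
  have h1 : u = v := hv u rfl
  have h2 : s' ≫ t = v := hv _ (show g ≫ s' ≫ t = g ≫ u by
    rw [← Category.assoc, hs', hst])
  rw [h1, ← h2]
  exact ⟨V, s', t, hV, rfl⟩

theorem stmt12 [Preadditive C] [HasZeroObject C] [HasFiniteBiproducts C]
    (P : PretorsionTheory C) :
    letI σ := Quotient.functor (trivRel (P.T ∩ P.F))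
    (∀ X ∈ P.T, ∀ Y ∈ P.F, ∀ h : σ.obj X ⟶ σ.obj Y, h = σ.map (0 : X ⟶ Y)) ∧
    (∀ X : C, ∃ (A B : C) (f : A ⟶ X) (g : X ⟶ B), A ∈ P.T ∧ B ∈ P.F ∧
      σ.map f ≫ σ.map g = σ.map (0 : A ⟶ B) ∧
      (∀ (W : C) (h : σ.obj W ⟶ σ.obj X), h ≫ σ.map g = σ.map (0 : W ⟶ B) →
        ∃! k : σ.obj W ⟶ σ.obj A, k ≫ σ.map f = h) ∧
      (∀ (W : C) (h : σ.obj X ⟶ σ.obj W), σ.map f ≫ h = σ.map (0 : A ⟶ W) →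
        ∃! k : σ.obj B ⟶ σ.obj W, σ.map g ≫ k = h)) := by
  set σ := Quotient.functor (trivRel (P.T ∩ P.F)) with hσ
  have key : ∀ {X Y : C} (u v : X ⟶ Y),
      σ.map u = σ.map v ↔ IsTrivialMor (P.T ∩ P.F) (u - v) :=
    fun u v => Quotient.functor_map_eq_iff _ u v
  have triv_eq : ∀ {X Y : C} {u v : X ⟶ Y}, IsTrivialMor (P.T ∩ P.F) (u - v) →
      σ.map u = σ.map v := fun h => (key _ _).2 h
  constructor
  · intro X hX Y hY h
    obtain ⟨l, rfl⟩ := σ.map_surjective h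
    exact triv_eq (by rw [sub_zero]; exact P.hom_triv hX hY l)
  · intro X
    obtain ⟨A, B, f, g, hA, hB, hk, hc⟩ := P.exists_seq X
    refine ⟨A, B, f, g, hA, hB, ?_, ?_, ?_⟩
    · rw [← σ.map_comp]
      exact triv_eq (by rw [sub_zero]; exact hk.1)
    · intro W h hh
      obtain ⟨l, rfl⟩ := σ.map_surjective h
      rw [← σ.map_comp] at hh
      have hlg : IsTrivialMor (P.T ∩ P.F) (l ≫ g) := by
        have := (key _ _).1 hh; rwa [sub_zero] at this
      obtain ⟨l', hl', -⟩ := hk.2 l hlg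
      refine ⟨σ.map l', show σ.map l' ≫ σ.map f = σ.map l by rw [← σ.map_comp, hl'], ?_⟩
      intro k hkk
      obtain ⟨k₀, rfl⟩ := σ.map_surjective k
      rw [← σ.map_comp] at hkk
      apply triv_eq
      have hdiff : IsTrivialMor (P.T ∩ P.F) ((k₀ - l') ≫ f) := by
        rw [Preadditive.sub_comp, hl']
        exact (key _ _).1 hkk
      exact P.ker_cancel hB hk hdiff
    · intro W h hh
      obtain ⟨l, rfl⟩ := σ.map_surjective h
      rw [← σ.map_comp] at hh
      have hfl : IsTrivialMor (P.T ∩ P.F) (f ≫ l) := by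
        have := (key _ _).1 hh; rwa [sub_zero] at this
      obtain ⟨l', hl', -⟩ := hc.2 l hfl
      refine ⟨σ.map l', show σ.map g ≫ σ.map l' = σ.map l by rw [← σ.map_comp, hl'], ?_⟩
      intro k hkk
      obtain ⟨k₀, rfl⟩ := σ.map_surjective k
      rw [← σ.map_comp] at hkk
      apply triv_eq
      have hdiff : IsTrivialMor (P.T ∩ P.F) (g ≫ (k₀ - l')) := by
        rw [Preadditive.comp_sub, hl']
        exact (key _ _).1 hkk
      exact P.coker_cancel hA hc hdiff
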